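/- Let X be a set and k a field. The free k-vector space on the set [X*] of normal diwords over X, equipped with the bilinear products determined on basis elements by: [u] ⊢ [v] = the concatenation uv with center at the center of v, and [u] ⊣ [v] = the concatenation uv with center at the center of u, is a dialgebra: both products are associative and satisfy a ⊣ (b ⊢ c) = (a ⊣ b) ⊣ c, (a ⊣ b) ⊢ c = a ⊢ (b ⊢ c), and a ⊢ (b ⊣ c) = (a ⊢ b) ⊣ c. -/

import Mathlib

universe u v

/-- A dialgebra over a field `k`: a `k`-vector space with two bilinear associative
products `lp` (written `⊢` in the paper) and `rp` (written `⊣`) satisfying the three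
dialgebra axioms. -/
class Dialgebra (k : Type*) (D : Type*) [Field k] [AddCommGroup D] [Module k D] where
  lp : D → D → D
  rp : D → D → D
  lp_add_left : ∀ a b c : D, lp (a + b) c = lp a c + lp b c
  lp_add_right : ∀ a b c : D, lp a (b + c) = lp a b + lp a c
  lp_smul_left : ∀ (r : k) (a b : D), lp (r • a) b = r • lp a b
  lp_smul_right : ∀ (r : k) (a b : D), lp a (r • b) = r • lp a b
  rp_add_left : ∀ a b c : D, rp (a + b) c = rp a c + rp b c
  rp_add_right : ∀ a b c : D, rp a (b + c) = rp a b + rp a c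
  rp_smul_left : ∀ (r : k) (a b : D), rp (r • a) b = r • rp a b
  rp_smul_right : ∀ (r : k) (a b : D), rp a (r • b) = r • rp a b
  lp_assoc : ∀ a b c : D, lp (lp a b) c = lp a (lp b c)
  rp_assoc : ∀ a b c : D, rp (rp a b) c = rp a (rp b c)
  di1 : ∀ a b c : D, rp a (lp b c) = rp (rp a b) c
  di2 : ∀ a b c : D, lp (rp a b) c = lp a (lp b c)
  di3 : ∀ a b c : D, lp a (rp b c) = rp (lp a b) c

/-- A Leibniz algebra over a field `k`: a `k`-vector space with a bilinear bracket
satisfying the Leibniz identity `[[a,b],c] = [[a,c],b] + [a,[b,c]]`. -/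
class LeibnizAlgebra (k : Type*) (L : Type*) [Field k] [AddCommGroup L] [Module k L] where
  br : L → L → L
  br_add_left : ∀ a b c : L, br (a + b) c = br a c + br b c
  br_add_right : ∀ a b c : L, br a (b + c) = br a b + br a c
  br_smul_left : ∀ (r : k) (a b : L), br (r • a) b = r • br a b
  br_smul_right : ∀ (r : k) (a b : L), br a (r • b) = r • br a b
  leibniz : ∀ a b c : L, br (br a b) c = br (br a c) b + br a (br b c)

/-- A normal diword over `X`: a nonempty word in `X` together with a marked letter
(its center), recorded as the letters to the left of the center, the center, and the
letters to the right of the center. -/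
structure NDiword (X : Type*) where
  left : List X
  center : X
  right : List X

namespace NDiword

variable {X : Type*}

/-- The underlying (associative) word of a normal diword. -/
def word (u : NDiword X) : List X := u.left ++ u.center :: u.right

/-- Concatenation with center at the center of the second factor: the product `⊢`
on normal diwords. -/
def lconc (u v : NDiword X) : NDiword X := ⟨u.word ++ v.left, v.center, v.right⟩

/-- Concatenation with center at the center of the first factor: the product `⊣`
on normal diwords. -/
def rconc (u v : NDiword X) : NDiword X := ⟨u.left, u.center, u.right ++ v.word⟩

/-- The deg-lex order on normal diwords: compare `wt([u]) = (n+m+1, m, x₋ₘ, …, xₙ)`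
lexicographically. -/
def dlt [LinearOrder X] (u v : NDiword X) : Prop :=
  u.word.length < v.word.length ∨
    (u.word.length = v.word.length ∧
      (u.left.length < v.left.length ∨
        (u.left.length = v.left.length ∧ List.Lex (· < ·) u.word v.word)))

end NDiword

/-- The free dialgebra on `X` over `k`: the free `k`-vector space on the set of
normal diwords over `X`. -/
abbrev FreeDialg (k : Type*) [Field k] (X : Type*) := NDiword X →₀ k

/-- The one-letter normal diword `ẋ`, as an element of the free dialgebra. -/
noncomputable def ofX (k : Type*) [Field k] {X : Type*} (x : X) : FreeDialg k X :=
  Finsupp.single ⟨[], x, []⟩ 1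

section FreeDialgebra

variable {k : Type*} [Field k] {X : Type*}

/-- The product `⊢` on the free dialgebra, extended bilinearly from normal diwords. -/
noncomputable def lmul (f g : FreeDialg k X) : FreeDialg k X :=
  f.sum fun u a => g.sum fun v b => Finsupp.single (u.lconc v) (a * b)

/-- The product `⊣` on the free dialgebra, extended bilinearly from normal diwords. -/
noncomputable def rmul (f g : FreeDialg k X) : FreeDialg k X :=
  f.sum fun u a => g.sum fun v b => Finsupp.single (u.rconc v) (a * b)

/-- `x₁ ⊢ (x₂ ⊢ (⋯ ⊢ t))` for a word `a = x₁x₂⋯` of letters. -/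
noncomputable def lfold (a : List X) (t : FreeDialg k X) : FreeDialg k X :=
  a.foldr (fun x s => lmul (ofX k x) s) t

/-- `((t ⊣ x₁) ⊣ x₂) ⊣ ⋯` for a word `b = x₁x₂⋯` of letters. -/
noncomputable def rfold (t : FreeDialg k X) (b : List X) : FreeDialg k X :=
  b.foldl (fun s x => rmul s (ofX k x)) t

/-- `f` is left normed: every normal diword in its support has its center at the
last letter. -/
def LeftNormed (f : FreeDialg k X) : Prop := ∀ u ∈ f.support, u.right = ([] : List X)

/-- `f` is right normed: every normal diword in its support has its center at the
first letter. -/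
def RightNormed (f : FreeDialg k X) : Prop := ∀ u ∈ f.support, u.left = ([] : List X)

/-- `u` is the leading term (maximal term in the deg-lex order) of `f`. -/
def IsMaxTerm [LinearOrder X] (f : FreeDialg k X) (u : NDiword X) : Prop :=
  u ∈ f.support ∧ ∀ v ∈ f.support, v ≠ u → v.dlt u

/-- `f` is monic: its leading coefficient is `1`. -/
def Monic [LinearOrder X] (f : FreeDialg k X) : Prop :=
  ∃ u, IsMaxTerm f u ∧ f u = 1

/-- A context for an `s`-diword `[asb]`: a normal diword with one letter `x_k`
removed, where `s` is to be substituted.  `center a b` is the case `k = 0` (so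
`[asb] = a ⊢ ⋯ ⊢ s ⊣ ⋯ ⊣ b`); `left a w` is the case `k < 0` (so
`[asb] = a ⊢ ⋯ ⊢ s ⊢ [w]` with the center inside `w`); `right w b` is the case
`k > 0` (so `[asb] = [w] ⊣ s ⊣ ⋯ ⊣ b` with the center inside `w`). -/
inductive Ctx (X : Type*) where
  | center (a b : List X)
  | left (a : List X) (w : NDiword X)
  | right (w : NDiword X) (b : List X)

/-- The `s`-diword `[asb]` determined by a context: substitute `s` into the context. -/
noncomputable def Ctx.eval (s : FreeDialg k X) : Ctx X → FreeDialg k X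
  | Ctx.center a b => rfold (lfold a s) b
  | Ctx.left a w => lfold a (lmul s (Finsupp.single w 1))
  | Ctx.right w b => rfold (rmul (Finsupp.single w 1) s) b

/-- Substituting a normal diword `t` into a context gives a normal diword `[atb]`. -/
def Ctx.subst {X : Type*} (t : NDiword X) : Ctx X → NDiword X
  | Ctx.center a b => ⟨a ++ t.left, t.center, t.right ++ b⟩
  | Ctx.left a w => ⟨a ++ t.word ++ w.left, w.center, w.right⟩
  | Ctx.right w b => ⟨w.left, w.center, w.right ++ t.word ++ b⟩

/-- `[asb]` is a normal `s`-diword: either `s` sits at the center (`k = 0`), or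
`k < 0` and `s` is left normed, or `k > 0` and `s` is right normed. -/
def IsNormalFor (s : FreeDialg k X) : Ctx X → Prop
  | Ctx.center _ _ => True
  | Ctx.left _ _ => LeftNormed s
  | Ctx.right _ _ => RightNormed s

/-- Membership in the two-sided dialgebra ideal generated by `S`. -/
inductive IdealGen (S : Set (FreeDialg k X)) : FreeDialg k X → Prop
  | of {s : FreeDialg k X} : s ∈ S → IdealGen S s
  | zero : IdealGen S 0
  | add {f g : FreeDialg k X} : IdealGen S f → IdealGen S g → IdealGen S (f + g)
  | smul (r : k) {f : FreeDialg k X} : IdealGen S f → IdealGen S (r • f)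
  | lmul_left (g : FreeDialg k X) {f : FreeDialg k X} : IdealGen S f → IdealGen S (lmul g f)
  | lmul_right (g : FreeDialg k X) {f : FreeDialg k X} : IdealGen S f → IdealGen S (lmul f g)
  | rmul_left (g : FreeDialg k X) {f : FreeDialg k X} : IdealGen S f → IdealGen S (rmul g f)
  | rmul_right (g : FreeDialg k X) {f : FreeDialg k X} : IdealGen S f → IdealGen S (rmul f g)

/-- The two-sided dialgebra ideal `Id(S)` generated by `S`, as a submodule. -/
def dialgIdeal (S : Set (FreeDialg k X)) : Submodule k (FreeDialg k X) where
  carrier := {f | IdealGen S f}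
  add_mem' := fun hf hg => IdealGen.add hf hg
  zero_mem' := IdealGen.zero
  smul_mem' := fun r _ hf => IdealGen.smul r hf

end FreeDialgebra

section GSB

variable {k : Type*} [Field k] {X : Type*}

/-- `h` is a linear combination `Σᵢ αᵢ [aᵢsᵢbᵢ]` of `sᵢ`-diwords with `sᵢ ∈ S`, where
each pair `(sᵢ, [aᵢ⋅bᵢ])` satisfies the property `P`. -/
def IsCombination (S : Set (FreeDialg k X)) (h : FreeDialg k X)
    (P : FreeDialg k X → Ctx X → Prop) : Prop :=
  ∃ (n : ℕ) (α : Fin n → k) (s : Fin n → FreeDialg k X) (c : Fin n → Ctx X),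
    (∀ i, s i ∈ S) ∧ (∀ i, P (s i) (c i)) ∧
    h = ∑ i, α i • (c i).eval (s i)

/-- The composition of left multiplication `x ⊣ f` is trivial modulo `S`. -/
def TrivLMul [LinearOrder X] (S : Set (FreeDialg k X)) (x : X) (f : FreeDialg k X) : Prop :=
  IsCombination S (rmul (ofX k x) f) fun s c =>
    IsNormalFor s c ∧ RightNormed s ∧ RightNormed (c.eval s) ∧
      ∀ u m, IsMaxTerm s u → IsMaxTerm (rmul (ofX k x) f) m →
        (c.subst u).word.length ≤ m.word.length

/-- The composition of right multiplication `f ⊢ x` is trivial modulo `S`. -/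
def TrivRMul [LinearOrder X] (S : Set (FreeDialg k X)) (x : X) (f : FreeDialg k X) : Prop :=
  IsCombination S (lmul f (ofX k x)) fun s c =>
    IsNormalFor s c ∧ LeftNormed s ∧ LeftNormed (c.eval s) ∧
      ∀ u m, IsMaxTerm s u → IsMaxTerm (lmul f (ofX k x)) m →
        (c.subst u).word.length ≤ m.word.length

/-- All compositions of left multiplication in `S` are trivial modulo `S`. -/
def LMulCompsTrivial [LinearOrder X] (S : Set (FreeDialg k X)) : Prop :=
  ∀ f ∈ S, ¬ RightNormed f → ∀ x : X, TrivLMul S x f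

/-- All compositions of right multiplication in `S` are trivial modulo `S`. -/
def RMulCompsTrivial [LinearOrder X] (S : Set (FreeDialg k X)) : Prop :=
  ∀ f ∈ S, ¬ LeftNormed f → ∀ x : X, TrivRMul S x f

/-- `h` is trivial modulo `(S, [w])`: it is a combination of normal `S`-diwords with
leading normal diwords `< [w]`; moreover all the summands are right (resp. left)
normed `S`-diwords whenever the side condition `rn` (resp. `ln`) holds. -/
def TrivBelowWith [LinearOrder X] (S : Set (FreeDialg k X)) (h : FreeDialg k X)
    (w : NDiword X) (rn ln : Prop) : Prop :=
  IsCombination S h fun s c =>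
    IsNormalFor s c ∧ (∀ u, IsMaxTerm s u → (c.subst u).dlt w) ∧
      (rn → RightNormed s ∧ RightNormed (c.eval s)) ∧
      (ln → LeftNormed s ∧ LeftNormed (c.eval s))

/-- All compositions of inclusion among elements of `S` are trivial. -/
def InclCompsTrivial [LinearOrder X] (S : Set (FreeDialg k X)) : Prop :=
  ∀ f ∈ S, ∀ g ∈ S, ∀ (fb gb : NDiword X) (c : Ctx X),
    IsMaxTerm f fb → IsMaxTerm g gb → IsNormalFor g c → fb = c.subst gb →
      TrivBelowWith S (f - c.eval g) fb
        (RightNormed f ∧ RightNormed g ∧ RightNormed (c.eval g))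
        (LeftNormed f ∧ LeftNormed g ∧ LeftNormed (c.eval g))

/-- A context with no letters before the substituted polynomial (shape `[fb]`). -/
def Ctx.noLeft {X : Type*} : Ctx X → Prop
  | Ctx.center a _ => a = []
  | Ctx.left a _ => a = []
  | Ctx.right _ _ => False

/-- A context with no letters after the substituted polynomial (shape `[ag]`). -/
def Ctx.noRight {X : Type*} : Ctx X → Prop
  | Ctx.center _ b => b = []
  | Ctx.right _ b => b = []
  | Ctx.left _ _ => False

/-- All compositions of intersection among elements of `S` are trivial. -/
def IntersectCompsTrivial [LinearOrder X] (S : Set (FreeDialg k X)) : Prop :=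
  ∀ f ∈ S, ∀ g ∈ S, ∀ (fb gb : NDiword X) (cf cg : Ctx X),
    IsMaxTerm f fb → IsMaxTerm g gb → IsNormalFor f cf → IsNormalFor g cg →
    cf.noLeft → cg.noRight → cf.subst fb = cg.subst gb →
    (cf.subst fb).word.length < fb.word.length + gb.word.length →
      TrivBelowWith S (cf.eval f - cg.eval g) (cf.subst fb)
        (RightNormed f ∧ RightNormed g ∧ RightNormed (cf.eval f) ∧ RightNormed (cg.eval g))
        (LeftNormed f ∧ LeftNormed g ∧ LeftNormed (cf.eval f) ∧ LeftNormed (cg.eval g))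

/-- `S` is a Gröbner–Shirshov basis in the free dialgebra: `S` is monic and all
compositions (left multiplication, right multiplication, inclusion, intersection)
of elements of `S` are trivial. -/
def IsGSB [LinearOrder X] (S : Set (FreeDialg k X)) : Prop :=
  (∀ f ∈ S, Monic f) ∧ LMulCompsTrivial S ∧ RMulCompsTrivial S ∧
    InclCompsTrivial S ∧ IntersectCompsTrivial S

/-- `Irr(S)`: the normal diwords that are not of the form `[a[s̄]b]` for any `s ∈ S`
and normal `s`-diword `[asb]`. -/
def IrrSet [LinearOrder X] (S : Set (FreeDialg k X)) : Set (NDiword X) :=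
  {u | ¬ ∃ s ∈ S, ∃ (c : Ctx X) (sb : NDiword X),
    IsMaxTerm s sb ∧ IsNormalFor s c ∧ u = c.subst sb}

end GSB

section Aux

variable {k : Type*} [Field k] {X : Type*}

lemma NDiword.lconc_word (u v : NDiword X) : (u.lconc v).word = u.word ++ v.word := by
  simp [NDiword.lconc, NDiword.word]

lemma NDiword.rconc_word (u v : NDiword X) : (u.rconc v).word = u.word ++ v.word := by
  simp [NDiword.rconc, NDiword.word]

lemma lmul_single_single (u v : NDiword X) (a b : k) :
    lmul (Finsupp.single u a) (Finsupp.single v b)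
      = Finsupp.single (u.lconc v) (a * b) := by
  unfold lmul
  rw [Finsupp.sum_single_index, Finsupp.sum_single_index]
  · simp
  · simp [Finsupp.sum_single_index]

lemma rmul_single_single (u v : NDiword X) (a b : k) :
    rmul (Finsupp.single u a) (Finsupp.single v b)
      = Finsupp.single (u.rconc v) (a * b) := by
  unfold rmul
  rw [Finsupp.sum_single_index, Finsupp.sum_single_index]
  · simp
  · simp [Finsupp.sum_single_index]

lemma lmul_zero_left (g : FreeDialg k X) : lmul (0 : FreeDialg k X) g = 0 := by
  simp [lmul]

lemma lmul_zero_right (f : FreeDialg k X) : lmul f (0 : FreeDialg k X) = 0 := by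
  simp [lmul]

lemma rmul_zero_left (g : FreeDialg k X) : rmul (0 : FreeDialg k X) g = 0 := by
  simp [rmul]

lemma rmul_zero_right (f : FreeDialg k X) : rmul f (0 : FreeDialg k X) = 0 := by
  simp [rmul]

lemma lmul_add_left (f g h : FreeDialg k X) : lmul (f + g) h = lmul f h + lmul g h := by
  unfold lmul
  rw [Finsupp.sum_add_index'] <;> simp [add_mul, Finsupp.single_add, Finsupp.sum_add]

lemma lmul_add_right (f g h : FreeDialg k X) : lmul f (g + h) = lmul f g + lmul f h := by
  unfold lmul
  rw [← Finsupp.sum_add]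
  congr 1
  funext u a
  rw [Finsupp.sum_add_index'] <;> simp [mul_add, Finsupp.single_add]

lemma rmul_add_left (f g h : FreeDialg k X) : rmul (f + g) h = rmul f h + rmul g h := by
  unfold rmul
  rw [Finsupp.sum_add_index'] <;> simp [add_mul, Finsupp.single_add, Finsupp.sum_add]

lemma rmul_add_right (f g h : FreeDialg k X) : rmul f (g + h) = rmul f g + rmul f h := by
  unfold rmul
  rw [← Finsupp.sum_add]
  congr 1
  funext u a
  rw [Finsupp.sum_add_index'] <;> simp [mul_add, Finsupp.single_add]

lemma lmul_smul_left (r : k) (f g : FreeDialg k X) : lmul (r • f) g = r • lmul f g := by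
  unfold lmul
  rw [Finsupp.sum_smul_index, Finsupp.smul_sum]
  · congr 1; funext u a
    rw [Finsupp.smul_sum]
    congr 1; funext v b
    rw [Finsupp.smul_single, smul_eq_mul, mul_assoc]
  · simp

lemma lmul_smul_right (r : k) (f g : FreeDialg k X) : lmul f (r • g) = r • lmul f g := by
  unfold lmul
  rw [Finsupp.smul_sum]
  congr 1; funext u a
  rw [Finsupp.sum_smul_index, Finsupp.smul_sum]
  · congr 1; funext v b
    rw [Finsupp.smul_single, smul_eq_mul, mul_left_comm]
  · simp

lemma rmul_smul_left (r : k) (f g : FreeDialg k X) : rmul (r • f) g = r • rmul f g := by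
  unfold rmul
  rw [Finsupp.sum_smul_index, Finsupp.smul_sum]
  · congr 1; funext u a
    rw [Finsupp.smul_sum]
    congr 1; funext v b
    rw [Finsupp.smul_single, smul_eq_mul, mul_assoc]
  · simp

lemma rmul_smul_right (r : k) (f g : FreeDialg k X) : rmul f (r • g) = r • rmul f g := by
  unfold rmul
  rw [Finsupp.smul_sum]
  congr 1; funext u a
  rw [Finsupp.sum_smul_index, Finsupp.smul_sum]
  · congr 1; funext v b
    rw [Finsupp.smul_single, smul_eq_mul, mul_left_comm]
  · simp

/-- Reduce a ternary identity between products built from `lmul`/`rmul` to singles. -/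
lemma tri_ext {F G : FreeDialg k X → FreeDialg k X → FreeDialg k X → FreeDialg k X}
    (hF0a : ∀ g h, F 0 g h = 0) (hF0b : ∀ f h, F f 0 h = 0) (hF0c : ∀ f g, F f g 0 = 0)
    (hFa : ∀ f f' g h, F (f + f') g h = F f g h + F f' g h)
    (hFb : ∀ f g g' h, F f (g + g') h = F f g h + F f g' h)
    (hFc : ∀ f g h h', F f g (h + h') = F f g h + F f g h')
    (hG0a : ∀ g h, G 0 g h = 0) (hG0b : ∀ f h, G f 0 h = 0) (hG0c : ∀ f g, G f g 0 = 0)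
    (hGa : ∀ f f' g h, G (f + f') g h = G f g h + G f' g h)
    (hGb : ∀ f g g' h, G f (g + g') h = G f g h + G f g' h)
    (hGc : ∀ f g h h', G f g (h + h') = G f g h + G f g h')
    (hsingle : ∀ (u v w : NDiword X) (a b c : k),
      F (Finsupp.single u a) (Finsupp.single v b) (Finsupp.single w c)
        = G (Finsupp.single u a) (Finsupp.single v b) (Finsupp.single w c)) :
    ∀ f g h : FreeDialg k X, F f g h = G f g h := by
  have key2 : ∀ (u : NDiword X) (a : k) (v : NDiword X) (b : k) (h : FreeDialg k X),
      F (Finsupp.single u a) (Finsupp.single v b) h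
        = G (Finsupp.single u a) (Finsupp.single v b) h := by
    intro u a v b h
    induction h using Finsupp.induction with
    | zero => rw [hF0c, hG0c]
    | single_add w c h _ _ ih => rw [hFc, hGc, ih, hsingle]
  have key1 : ∀ (u : NDiword X) (a : k) (g h : FreeDialg k X),
      F (Finsupp.single u a) g h = G (Finsupp.single u a) g h := by
    intro u a g h
    induction g using Finsupp.induction with
    | zero => rw [hF0b, hG0b]
    | single_add v b g _ _ ih => rw [hFb, hGb, ih, key2]
  intro f g h
  induction f using Finsupp.induction with
  | zero => rw [hF0a, hG0a]
  | single_add u a f _ _ ih => rw [hFa, hGa, ih, key1]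

end Aux

/-- the free vector space on the normal diwords over `X`, with the
bilinear products determined on basis elements by `[u] ⊢ [v] = [u][v]` centered at
the center of `v` and `[u] ⊣ [v] = [u][v]` centered at the center of `u`, is a
dialgebra. -/
theorem freeDialg_is_dialgebra (k X : Type*) [Field k] :
    (∀ u v : NDiword X,
        lmul (Finsupp.single u (1 : k)) (Finsupp.single v 1)
          = Finsupp.single (u.lconc v) 1) ∧
    (∀ u v : NDiword X,
        rmul (Finsupp.single u (1 : k)) (Finsupp.single v 1)
          = Finsupp.single (u.rconc v) 1) ∧
    (∀ f g h : FreeDialg k X, lmul (f + g) h = lmul f h + lmul g h) ∧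
    (∀ f g h : FreeDialg k X, lmul f (g + h) = lmul f g + lmul f h) ∧
    (∀ (r : k) (f g : FreeDialg k X), lmul (r • f) g = r • lmul f g) ∧
    (∀ (r : k) (f g : FreeDialg k X), lmul f (r • g) = r • lmul f g) ∧
    (∀ f g h : FreeDialg k X, rmul (f + g) h = rmul f h + rmul g h) ∧
    (∀ f g h : FreeDialg k X, rmul f (g + h) = rmul f g + rmul f h) ∧
    (∀ (r : k) (f g : FreeDialg k X), rmul (r • f) g = r • rmul f g) ∧
    (∀ (r : k) (f g : FreeDialg k X), rmul f (r • g) = r • rmul f g) ∧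
    (∀ f g h : FreeDialg k X, lmul (lmul f g) h = lmul f (lmul g h)) ∧
    (∀ f g h : FreeDialg k X, rmul (rmul f g) h = rmul f (rmul g h)) ∧
    (∀ f g h : FreeDialg k X, rmul f (lmul g h) = rmul (rmul f g) h) ∧
    (∀ f g h : FreeDialg k X, lmul (rmul f g) h = lmul f (lmul g h)) ∧
    (∀ f g h : FreeDialg k X, lmul f (rmul g h) = rmul (lmul f g) h) := by
  refine ⟨fun u v => by rw [lmul_single_single, one_mul],
    fun u v => by rw [rmul_single_single, one_mul],
    lmul_add_left, lmul_add_right, lmul_smul_left, lmul_smul_right,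
    rmul_add_left, rmul_add_right, rmul_smul_left, rmul_smul_right,
    ?_, ?_, ?_, ?_, ?_⟩ <;>
  · refine tri_ext ?_ ?_ ?_ ?_ ?_ ?_ ?_ ?_ ?_ ?_ ?_ ?_ ?_ <;> intros <;>
    first
    | simp [lmul_zero_left, lmul_zero_right, rmul_zero_left, rmul_zero_right,
        lmul_add_left, lmul_add_right, rmul_add_left, rmul_add_right]
    | simp only [lmul_single_single, rmul_single_single, mul_assoc,
        NDiword.lconc, NDiword.rconc, NDiword.word, List.append_assoc, List.cons_append]
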